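/- Suppose λᵢ < 0 for i ≤ q and λᵢ > 0 for i > q, and let Ψ_α := √(2^{|α|}[λ]^{α+1}/(πⁿ α!)) · z^α_q e^{−Σᵢ|λᵢ||zⁱ|²} for α ∈ ℕ^n, where z^α_q := (\bar{z}¹)^{α₁}⋯(\bar{z}^q)^{α_q}(z^{q+1})^{α_{q+1}}⋯(zⁿ)^{α_n} and [λ]^{α+1} := ∏ᵢ|λᵢ|^{αᵢ+1}. Then {Ψ_α}_{α∈ℕⁿ} is an orthonormal family in L²(ℂⁿ, 2ⁿdm) and Σ_α Ψ_α(z)\overline{Ψ_α(w)} = (|λ₁⋯λₙ|/πⁿ) e^{2(Σᵢ₌₁^q |λᵢ|\bar{z}ⁱwⁱ + Σ_{i>q} |λᵢ|zⁱ\bar{w}ⁱ) − Σᵢ|λᵢ|(|zⁱ|²+|wⁱ|²)} for all z, w ∈ ℂⁿ. -/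

import Mathlib

set_option maxHeartbeats 1000000

open MeasureTheory

section Helpers

lemma sqrt_prod' {ι : Type*} (s : Finset ι) (f : ι → ℝ) (h : ∀ i ∈ s, 0 ≤ f i) :
    Real.sqrt (∏ i ∈ s, f i) = ∏ i ∈ s, Real.sqrt (f i) := by
  induction s using Finset.cons_induction with
  | empty => simp
  | cons a s ha ih =>
    rw [Finset.prod_cons, Finset.prod_cons, Real.sqrt_mul (h a (Finset.mem_cons_self a s)),
      ih (fun i hi => h i (Finset.mem_cons_of_mem hi))]

lemma integral_diag (c : ℝ) (hc : 0 < c) (a : ℕ) :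
    ∫ z : ℂ, (‖z‖ ^ (2 * a) * Real.exp (-c * ‖z‖ ^ 2) : ℝ)
      = Real.pi * (Nat.factorial a) / c ^ (a + 1) := by
  have h := Complex.integral_rpow_mul_exp_neg_mul_rpow (p := 2) (q := 2 * a) (b := c)
    one_le_two (lt_of_lt_of_le (by norm_num) (by positivity : (0:ℝ) ≤ 2 * a)) hc
  have e1 : ∀ z : ℂ, ‖z‖ ^ ((2 * a : ℕ) : ℝ) * Real.exp (-c * ‖z‖ ^ (2 : ℝ))
      = ‖z‖ ^ (2 * a) * Real.exp (-c * ‖z‖ ^ 2) := by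
    intro z
    rw [Real.rpow_natCast, Real.rpow_two]
  rw [show ((2 : ℝ) * a) = ((2 * a : ℕ) : ℝ) by push_cast; ring] at h
  simp_rw [e1] at h
  rw [h]
  have e2 : ((2 * a : ℕ) : ℝ) + 2 = 2 * ((a : ℝ) + 1) := by push_cast; ring
  rw [e2]
  rw [show (-(2 * ((a : ℝ) + 1)) / 2) = -((a : ℝ) + 1) by ring,
    show (2 * ((a : ℝ) + 1) / 2) = (a : ℝ) + 1 by ring,
    Real.Gamma_nat_eq_factorial, Real.rpow_neg hc.le,
    show ((a : ℝ) + 1) = ((a + 1 : ℕ) : ℝ) by push_cast; ring, Real.rpow_natCast]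
  field_simp

lemma integral_offdiag (c : ℝ) (a b : ℕ) (hab : a ≠ b) :
    ∫ z : ℂ, z ^ a * (starRingEnd ℂ) z ^ b * Complex.exp ((-c * ‖z‖ ^ 2 : ℝ) : ℂ) = 0 := by
  set f : ℂ → ℂ := fun z =>
    z ^ a * (starRingEnd ℂ) z ^ b * Complex.exp ((-c * ‖z‖ ^ 2 : ℝ) : ℂ) with hf
  have hd : (a : ℝ) - b ≠ 0 := sub_ne_zero.mpr (by exact_mod_cast hab)
  set θ : ℝ := Real.pi / ((a : ℝ) - b) with hθ
  set u : Circle := Circle.exp θ with hu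
  have h1 : ∫ z : ℂ, f (rotation u z) = ∫ z : ℂ, f z :=
    (rotation u).measurePreserving.integral_comp
      (rotation u).toHomeomorph.measurableEmbedding f
  have habs : ∀ z : ℂ, ‖(u : ℂ) * z‖ = ‖z‖ := by
    intro z; rw [norm_mul, Circle.norm_coe, one_mul]
  have h2 : ∀ z : ℂ, f (rotation u z)
      = ((u : ℂ) ^ a * (starRingEnd ℂ) (u : ℂ) ^ b) * f z := by
    intro z
    simp only [hf, rotation_apply, habs, map_mul, mul_pow]
    ring
  have hK : (u : ℂ) ^ a * (starRingEnd ℂ) (u : ℂ) ^ b = -1 := by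
    rw [hu, Circle.coe_exp, ← Complex.exp_conj]
    simp only [map_mul, Complex.conj_ofReal, Complex.conj_I, mul_neg]
    rw [← Complex.exp_nat_mul, ← Complex.exp_nat_mul, ← Complex.exp_add]
    have : (a : ℂ) * ((θ : ℂ) * Complex.I) + (b : ℂ) * -((θ : ℂ) * Complex.I)
        = (((a : ℝ) - b) * θ : ℝ) * Complex.I := by push_cast; ring
    rw [this, hθ, mul_div_cancel₀ _ hd, Complex.exp_pi_mul_I]
  have : ∫ z : ℂ, f z = -1 * ∫ z : ℂ, f z := by
    nth_rewrite 1 [← h1]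
    calc ∫ z : ℂ, f (rotation u z)
        = ∫ z : ℂ, ((u : ℂ) ^ a * (starRingEnd ℂ) (u : ℂ) ^ b) * f z := by
          exact integral_congr_ae (Filter.Eventually.of_forall h2)
      _ = -1 * ∫ z : ℂ, f z := by rw [integral_const_mul, hK]
  have h3 : (2 : ℂ) * ∫ z : ℂ, f z = 0 := by linear_combination this
  have := mul_eq_zero.mp h3
  simpa using this

lemma integral_pow_conj_pow (c : ℝ) (hc : 0 < c) (a b : ℕ) :
    ∫ z : ℂ, z ^ a * (starRingEnd ℂ) z ^ b * Complex.exp ((-c * ‖z‖ ^ 2 : ℝ) : ℂ)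
      = ((if a = b then Real.pi * (Nat.factorial a) / c ^ (a + 1) else 0 : ℝ) : ℂ) := by
  rcases eq_or_ne a b with rfl | hab
  · rw [if_pos rfl]
    have e : ∀ z : ℂ, z ^ a * (starRingEnd ℂ) z ^ a * Complex.exp ((-c * ‖z‖ ^ 2 : ℝ) : ℂ)
        = ((‖z‖ ^ (2 * a) * Real.exp (-c * ‖z‖ ^ 2) : ℝ) : ℂ) := by
      intro z
      rw [← mul_pow, Complex.mul_conj, ← Complex.sq_norm]
      push_cast
      rw [← pow_mul]
    simp_rw [e]
    rw [show (∫ z : ℂ, ((‖z‖ ^ (2 * a) * Real.exp (-c * ‖z‖ ^ 2) : ℝ) : ℂ))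
        = ((∫ z : ℂ, (‖z‖ ^ (2 * a) * Real.exp (-c * ‖z‖ ^ 2) : ℝ) : ℝ) : ℂ)
      from integral_ofReal, integral_diag c hc a]
  · rw [if_neg hab, integral_offdiag c a b hab]
    simp

lemma integral_conj_pow_pow (c : ℝ) (hc : 0 < c) (a b : ℕ) :
    ∫ z : ℂ, (starRingEnd ℂ) z ^ a * z ^ b * Complex.exp ((-c * ‖z‖ ^ 2 : ℝ) : ℂ)
      = ((if a = b then Real.pi * (Nat.factorial a) / c ^ (a + 1) else 0 : ℝ) : ℂ) := by
  have e : ∀ z : ℂ, (starRingEnd ℂ) z ^ a * z ^ b * Complex.exp ((-c * ‖z‖ ^ 2 : ℝ) : ℂ)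
      = (starRingEnd ℂ) (z ^ a * (starRingEnd ℂ) z ^ b
          * Complex.exp ((-c * ‖z‖ ^ 2 : ℝ) : ℂ)) := by
    intro z
    simp only [map_mul, map_pow, Complex.conj_conj, ← Complex.exp_conj, Complex.conj_ofReal]
  simp_rw [e]
  rw [integral_conj, integral_pow_conj_pow c hc a b]
  rw [Complex.conj_ofReal]

lemma summable_norm_pi_prod : ∀ {n : ℕ} (f : Fin n → ℕ → ℂ),
    (∀ i, Summable fun k => ‖f i k‖) →
    Summable fun α : Fin n → ℕ => ‖∏ i, f i (α i)‖ := by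
  intro n
  induction n with
  | zero => intro f _; exact .of_finite
  | succ n ih =>
    intro f hf
    have h2 : Summable fun p : ℕ × (Fin n → ℕ) =>
        ‖f 0 p.1‖ * ‖∏ i : Fin n, f i.succ (p.2 i)‖ := by
      apply Summable.mul_of_nonneg (hf 0) (ih (fun i => f i.succ) (fun i => hf i.succ))
      · exact fun _ => norm_nonneg _
      · exact fun _ => norm_nonneg _
    have := (Fin.consEquiv fun _ => ℕ).symm.summable_iff.mpr h2
    refine this.congr fun α => ?_
    simp only [Function.comp, Fin.consEquiv, Equiv.coe_fn_mk, Fin.prod_univ_succ, norm_mul]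
    rfl

lemma tsum_pi_prod : ∀ {n : ℕ} (f : Fin n → ℕ → ℂ),
    (∀ i, Summable fun k => ‖f i k‖) →
    ∑' α : Fin n → ℕ, ∏ i, f i (α i) = ∏ i, ∑' k, f i k := by
  intro n
  induction n with
  | zero =>
    intro f _
    simp only [Finset.univ_eq_empty, Finset.prod_empty]
    exact tsum_eq_single (fun i => i.elim0) (fun b hb =>
      absurd (Subsingleton.elim b _) hb)
  | succ n ih =>
    intro f hf
    have e := (Fin.consEquiv fun _ => ℕ).symm.symm.tsum_eq (fun α => ∏ i, f i (α i))
    rw [← e]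
    have : ∀ p : ℕ × (Fin n → ℕ),
        (∏ i, f i ((Fin.consEquiv fun _ => ℕ).symm.symm p i))
          = f 0 p.1 * ∏ i : Fin n, f i.succ (p.2 i) := by
      intro p
      rw [Fin.prod_univ_succ]
      simp [Fin.consEquiv]
    simp_rw [this]
    rw [← tsum_mul_tsum_of_summable_norm (hf 0)
      (summable_norm_pi_prod (fun i => f i.succ) (fun i => hf i.succ))]
    rw [ih (fun i => f i.succ) (fun i => hf i.succ), Fin.prod_univ_succ]

lemma tsum_pow_div_factorial (x : ℂ) :
    ∑' k : ℕ, x ^ k / (Nat.factorial k : ℂ) = Complex.exp x := by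
  rw [Complex.exp_eq_exp_ℂ, NormedSpace.exp_eq_tsum_div]

end Helpers

/-- The model harmonic forms
`Ψ_α = √(2^{|α|}[λ]^{α+1}/(πⁿ α!)) ⋅ z^α_q ⋅ e^{−Σᵢ|λᵢ||zⁱ|²}` (scalar coefficient), where
`z^α_q := (z̄¹)^{α₁}⋯(z̄^q)^{α_q}(z^{q+1})^{α_{q+1}}⋯(zⁿ)^{α_n}`. -/
noncomputable def psi (n q : ℕ) (lam : Fin n → ℝ) (α : Fin n → ℕ) (z : Fin n → ℂ) : ℂ :=
  (Real.sqrt ((2 : ℝ) ^ (∑ i, α i) * (∏ i, |lam i| ^ (α i + 1)) /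
      (Real.pi ^ n * ∏ i, (Nat.factorial (α i) : ℝ))) : ℂ)
    * (∏ i : Fin n, (if (i : ℕ) < q then (starRingEnd ℂ) (z i) else z i) ^ α i)
    * Complex.exp (-((∑ i, |lam i| * ‖(z i)‖ ^ 2 : ℝ) : ℂ))

lemma psi_eq (n q : ℕ) (lam : Fin n → ℝ) (α : Fin n → ℕ) (z : Fin n → ℂ) :
    psi n q lam α z = ∏ i,
      (((Real.sqrt (2 ^ α i * |lam i| ^ (α i + 1) / (Real.pi * (Nat.factorial (α i)))) : ℝ) : ℂ)
        * (if (i : ℕ) < q then (starRingEnd ℂ) (z i) else z i) ^ α i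
        * Complex.exp ((-(|lam i| * ‖(z i)‖ ^ 2) : ℝ) : ℂ)) := by
  unfold psi
  rw [Finset.prod_mul_distrib, Finset.prod_mul_distrib]
  congr 1
  · congr 1
    rw [← Complex.ofReal_prod, ← sqrt_prod' _ _ (fun i _ => by positivity)]
    congr 2
    rw [Finset.prod_div_distrib, Finset.prod_mul_distrib, Finset.prod_mul_distrib,
      Finset.prod_pow_eq_pow_sum, Finset.prod_const, Finset.card_univ, Fintype.card_fin]
  · have : (-((∑ i, |lam i| * ‖(z i)‖ ^ 2 : ℝ) : ℂ))
        = ∑ i, ((-(|lam i| * ‖(z i)‖ ^ 2) : ℝ) : ℂ) := by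
      push_cast
      rw [← Finset.sum_neg_distrib]
    rw [this, Complex.exp_sum]

/-- if `λᵢ < 0` for `i ≤ q` and `λᵢ > 0` for `i > q`, the family `{Ψ_α}` is
orthonormal in `L²(ℂⁿ, 2ⁿ dm)` and
`Σ_α Ψ_α(z) conj (Ψ_α(w)) = (|λ₁⋯λₙ|/πⁿ) e^{2(Σ_{i≤q}|λᵢ|z̄ⁱwⁱ + Σ_{i>q}|λᵢ|zⁱw̄ⁱ) − Σᵢ|λᵢ|(|zⁱ|²+|wⁱ|²)}`. -/
theorem stmt_12 (n q : ℕ) (lam : Fin n → ℝ)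
    (hneg : ∀ i : Fin n, (i : ℕ) < q → lam i < 0)
    (hpos : ∀ i : Fin n, q ≤ (i : ℕ) → 0 < lam i) :
    (∀ α β : Fin n → ℕ,
      ∫ z : Fin n → ℂ, (2 : ℂ) ^ n * (psi n q lam α z * (starRingEnd ℂ) (psi n q lam β z))
        = if α = β then 1 else 0) ∧
    (∀ z w : Fin n → ℂ,
      ∑' α : Fin n → ℕ, psi n q lam α z * (starRingEnd ℂ) (psi n q lam α w)
        = ((|∏ i, lam i| / Real.pi ^ n : ℝ) : ℂ) *
            Complex.exp
              (2 * ((∑ i ∈ Finset.univ.filter (fun i : Fin n => (i : ℕ) < q),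
                        ((|lam i| : ℝ) : ℂ) * (starRingEnd ℂ) (z i) * w i)
                  + (∑ i ∈ Finset.univ.filter (fun i : Fin n => q ≤ (i : ℕ)),
                        ((|lam i| : ℝ) : ℂ) * z i * (starRingEnd ℂ) (w i)))
                - ((∑ i, |lam i| * (‖(z i)‖ ^ 2 + ‖(w i)‖ ^ 2) : ℝ) : ℂ))) := by
  have hlam : ∀ i : Fin n, 0 < |lam i| := by
    intro i
    rcases lt_or_ge (i : ℕ) q with h | h
    · exact abs_pos.mpr (hneg i h).ne
    · exact abs_pos.mpr (hpos i h).ne'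
  constructor
  · intro α β
    set G : Fin n → ℂ → ℂ := fun i ζ =>
      (2 : ℂ) * ((Real.sqrt (2 ^ α i * |lam i| ^ (α i + 1) / (Real.pi * (Nat.factorial (α i)))) : ℝ) : ℂ)
        * ((Real.sqrt (2 ^ β i * |lam i| ^ (β i + 1) / (Real.pi * (Nat.factorial (β i)))) : ℝ) : ℂ)
        * (if (i : ℕ) < q then (starRingEnd ℂ) ζ else ζ) ^ α i
        * (starRingEnd ℂ) (if (i : ℕ) < q then (starRingEnd ℂ) ζ else ζ) ^ β i
        * Complex.exp ((-(|lam i| * ‖ζ‖ ^ 2) : ℝ) : ℂ)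
        * Complex.exp ((-(|lam i| * ‖ζ‖ ^ 2) : ℝ) : ℂ) with hG
    have key : ∀ z : Fin n → ℂ,
        (2 : ℂ) ^ n * (psi n q lam α z * (starRingEnd ℂ) (psi n q lam β z))
          = ∏ i, G i (z i) := by
      intro z
      have h2n : (2 : ℂ) ^ n = ∏ _i : Fin n, (2 : ℂ) := by
        rw [Finset.prod_const, Finset.card_univ, Fintype.card_fin]
      rw [psi_eq, psi_eq, map_prod, h2n, ← Finset.prod_mul_distrib, ← Finset.prod_mul_distrib]
      refine Finset.prod_congr rfl fun i _ => ?_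
      simp only [hG, map_mul, map_pow, Complex.conj_ofReal, ← Complex.exp_conj]
      ring
    calc ∫ z : Fin n → ℂ, (2 : ℂ) ^ n * (psi n q lam α z * (starRingEnd ℂ) (psi n q lam β z))
        = ∫ z : Fin n → ℂ, ∏ i, G i (z i) :=
          integral_congr_ae (Filter.Eventually.of_forall key)
      _ = ∏ i, ∫ ζ : ℂ, G i ζ := integral_fintype_prod_eq_prod G
      _ = ∏ i, (if α i = β i then 1 else 0 : ℂ) := by
          refine Finset.prod_congr rfl fun i _ => ?_
          have h2μ : (0:ℝ) < 2 * |lam i| := by have := hlam i; linarith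
          have hexp : ∀ ζ : ℂ, Complex.exp ((-(|lam i| * ‖ζ‖ ^ 2) : ℝ) : ℂ)
              * Complex.exp ((-(|lam i| * ‖ζ‖ ^ 2) : ℝ) : ℂ)
              = Complex.exp ((-(2 * |lam i|) * ‖ζ‖ ^ 2 : ℝ) : ℂ) := by
            intro ζ
            rw [← Complex.exp_add]
            congr 1
            push_cast
            ring
          have hval : (2:ℂ)
              * ((Real.sqrt (2 ^ α i * |lam i| ^ (α i + 1) / (Real.pi * (Nat.factorial (α i)))) : ℝ) : ℂ)
              * ((Real.sqrt (2 ^ β i * |lam i| ^ (β i + 1) / (Real.pi * (Nat.factorial (β i)))) : ℝ) : ℂ)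
              * ((if α i = β i then Real.pi * (Nat.factorial (α i)) / (2 * |lam i|) ^ (α i + 1) else 0 : ℝ) : ℂ)
              = (if α i = β i then 1 else 0 : ℂ) := by
            by_cases hab : α i = β i
            · rw [if_pos hab, if_pos hab, ← hab]
              rw [show ((2:ℂ)
                  * ((Real.sqrt (2 ^ α i * |lam i| ^ (α i + 1) / (Real.pi * (Nat.factorial (α i)))) : ℝ) : ℂ)
                  * ((Real.sqrt (2 ^ α i * |lam i| ^ (α i + 1) / (Real.pi * (Nat.factorial (α i)))) : ℝ) : ℂ)
                  * ((Real.pi * (Nat.factorial (α i)) / (2 * |lam i|) ^ (α i + 1) : ℝ) : ℂ))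
                = (((2 : ℝ) * (Real.sqrt (2 ^ α i * |lam i| ^ (α i + 1) / (Real.pi * (Nat.factorial (α i))))
                    * Real.sqrt (2 ^ α i * |lam i| ^ (α i + 1) / (Real.pi * (Nat.factorial (α i)))))
                    * (Real.pi * (Nat.factorial (α i)) / (2 * |lam i|) ^ (α i + 1)) : ℝ) : ℂ) by push_cast; ring]
              rw [Real.mul_self_sqrt (by positivity)]
              norm_cast
              have hπ : (0:ℝ) < Real.pi := Real.pi_pos
              have hfa : (0:ℝ) < (Nat.factorial (α i) : ℝ) := by
                exact_mod_cast Nat.factorial_pos (α i)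
              have hμ : (0:ℝ) < |lam i| := hlam i
              rw [mul_pow]
              field_simp
              push_cast
              ring
            · rw [if_neg hab, if_neg hab]
              simp
          by_cases hi : (i : ℕ) < q
          · have : ∀ ζ : ℂ, G i ζ
                = ((2:ℂ)
                  * ((Real.sqrt (2 ^ α i * |lam i| ^ (α i + 1) / (Real.pi * (Nat.factorial (α i)))) : ℝ) : ℂ)
                  * ((Real.sqrt (2 ^ β i * |lam i| ^ (β i + 1) / (Real.pi * (Nat.factorial (β i)))) : ℝ) : ℂ))
                  * ((starRingEnd ℂ) ζ ^ α i * ζ ^ β i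
                    * Complex.exp ((-(2 * |lam i|) * ‖ζ‖ ^ 2 : ℝ) : ℂ)) := by
              intro ζ
              rw [hG]
              simp only [if_pos hi, Complex.conj_conj]
              rw [show ∀ A B C D E F : ℂ, 2 * A * B * C * D * E * F = (2 * A * B) * (C * D * (E * F))
                from fun _ _ _ _ _ _ => by ring, hexp ζ]
            simp_rw [this]
            rw [integral_const_mul, integral_conj_pow_pow _ h2μ, ← hval]
          · have : ∀ ζ : ℂ, G i ζ
                = ((2:ℂ)
                  * ((Real.sqrt (2 ^ α i * |lam i| ^ (α i + 1) / (Real.pi * (Nat.factorial (α i)))) : ℝ) : ℂ)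
                  * ((Real.sqrt (2 ^ β i * |lam i| ^ (β i + 1) / (Real.pi * (Nat.factorial (β i)))) : ℝ) : ℂ))
                  * (ζ ^ α i * (starRingEnd ℂ) ζ ^ β i
                    * Complex.exp ((-(2 * |lam i|) * ‖ζ‖ ^ 2 : ℝ) : ℂ)) := by
              intro ζ
              rw [hG]
              simp only [if_neg hi]
              rw [show ∀ A B C D E F : ℂ, 2 * A * B * C * D * E * F = (2 * A * B) * (C * D * (E * F))
                from fun _ _ _ _ _ _ => by ring, hexp ζ]
            simp_rw [this]
            rw [integral_const_mul, integral_pow_conj_pow _ h2μ, ← hval]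
      _ = if α = β then 1 else 0 := by
          by_cases hab : α = β
          · subst hab; simp
          · obtain ⟨i, hi⟩ : ∃ i, α i ≠ β i := by
              by_contra h; push_neg at h; exact hab (funext h)
            rw [if_neg hab]
            exact Finset.prod_eq_zero (Finset.mem_univ i) (by rw [if_neg hi])
  · intro z w
    set ζ : Fin n → ℂ := fun i =>
      (if (i : ℕ) < q then (starRingEnd ℂ) (z i) else z i)
        * (starRingEnd ℂ) (if (i : ℕ) < q then (starRingEnd ℂ) (w i) else w i) with hζ
    set E : Fin n → ℂ := fun i =>
      Complex.exp ((-(|lam i| * ‖(z i)‖ ^ 2) : ℝ) : ℂ)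
        * Complex.exp ((-(|lam i| * ‖(w i)‖ ^ 2) : ℝ) : ℂ) with hE
    set h : Fin n → ℕ → ℂ := fun i k =>
      ((2 ^ k * |lam i| ^ (k + 1) / (Real.pi * (Nat.factorial k)) : ℝ) : ℂ) * ζ i ^ k * E i with hh
    have key : ∀ α : Fin n → ℕ, psi n q lam α z * (starRingEnd ℂ) (psi n q lam α w)
        = ∏ i, h i (α i) := by
      intro α
      rw [psi_eq, psi_eq, map_prod, ← Finset.prod_mul_distrib]
      refine Finset.prod_congr rfl fun i _ => ?_
      simp only [hh, hζ, hE, map_mul, map_pow, Complex.conj_ofReal, ← Complex.exp_conj]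
      rw [mul_pow]
      rw [show ((2 ^ (α i) * |lam i| ^ (α i + 1) / (Real.pi * ((Nat.factorial (α i)) : ℝ)) : ℝ) : ℂ)
          = ((Real.sqrt (2 ^ (α i) * |lam i| ^ (α i + 1) / (Real.pi * (Nat.factorial (α i)))) : ℝ) : ℂ)
            * ((Real.sqrt (2 ^ (α i) * |lam i| ^ (α i + 1) / (Real.pi * (Nat.factorial (α i)))) : ℝ) : ℂ) by
        rw [← Complex.ofReal_mul, Real.mul_self_sqrt (by positivity)]]
      ring
    have hsum : ∀ i, Summable fun k => ‖h i k‖ := by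
      intro i
      have he : ∀ k, ‖h i k‖
          = (|lam i| * ‖E i‖ / Real.pi)
            * ((2 * |lam i| * ‖(ζ i)‖) ^ k / (Nat.factorial k)) := by
        intro k
        have hπ : (0:ℝ) < Real.pi := Real.pi_pos
        have hfa : (0:ℝ) < (Nat.factorial k : ℝ) := by exact_mod_cast Nat.factorial_pos k
        have hμ : (0:ℝ) < |lam i| := hlam i
        have hgen : ∀ Z W : ℂ,
            ‖((2 ^ k * |lam i| ^ (k + 1) / (Real.pi * (Nat.factorial k)) : ℝ) : ℂ) * Z ^ k * W‖
            = (|lam i| * ‖W‖ / Real.pi)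
              * ((2 * |lam i| * ‖Z‖) ^ k / (Nat.factorial k)) := by
          intro Z W
          simp only [norm_mul, norm_pow, Complex.norm_real, Real.norm_eq_abs]
          rw [abs_of_nonneg (by positivity : (0:ℝ) ≤ 2 ^ k * |lam i| ^ (k + 1)
            / (Real.pi * (Nat.factorial k)))]
          rw [mul_pow, mul_pow, pow_succ]
          field_simp
        exact hgen (ζ i) (E i)
      rw [show (fun k => ‖h i k‖) = fun k => (|lam i| * ‖E i‖ / Real.pi)
          * ((2 * |lam i| * ‖(ζ i)‖) ^ k / (Nat.factorial k)) from funext he]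
      exact (Real.summable_pow_div_factorial _).mul_left _
    rw [tsum_congr key, tsum_pi_prod h hsum]
    have hterm : ∀ i, ∑' k, h i k
        = ((|lam i| / Real.pi : ℝ) : ℂ) * E i
          * Complex.exp (2 * ((|lam i| : ℝ) : ℂ) * ζ i) := by
      intro i
      have he : ∀ k, h i k = (((|lam i| / Real.pi : ℝ) : ℂ) * E i)
          * ((2 * ((|lam i| : ℝ) : ℂ) * ζ i) ^ k / (Nat.factorial k : ℂ)) := by
        intro k
        have hπ : (0:ℝ) < Real.pi := Real.pi_pos
        have hfa : (0:ℝ) < (Nat.factorial k : ℝ) := by exact_mod_cast Nat.factorial_pos k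
        have hπ' : ((Real.pi : ℝ) : ℂ) ≠ 0 := by exact_mod_cast hπ.ne'
        have hfa' : ((Nat.factorial k : ℕ) : ℂ) ≠ 0 := by exact_mod_cast hfa.ne'
        have hgen : ∀ Z W : ℂ,
            ((2 ^ k * |lam i| ^ (k + 1) / (Real.pi * (Nat.factorial k)) : ℝ) : ℂ) * Z ^ k * W
            = (((|lam i| / Real.pi : ℝ) : ℂ) * W)
              * ((2 * ((|lam i| : ℝ) : ℂ) * Z) ^ k / (Nat.factorial k : ℂ)) := by
          intro Z W
          push_cast
          rw [mul_pow, mul_pow, pow_succ]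
          field_simp
        exact hgen (ζ i) (E i)
      rw [tsum_congr he, tsum_mul_left, tsum_pow_div_factorial]
    rw [Finset.prod_congr rfl (fun i _ => hterm i)]
    rw [Finset.prod_mul_distrib, Finset.prod_mul_distrib]
    have hC : (∏ i, ((|lam i| / Real.pi : ℝ) : ℂ)) = ((|∏ i, lam i| / Real.pi ^ n : ℝ) : ℂ) := by
      rw [← Complex.ofReal_prod]
      congr 1
      rw [Finset.prod_div_distrib, Finset.prod_const, Finset.card_univ, Fintype.card_fin,
        Finset.abs_prod]
    have hEprod : (∏ i, E i)
        = Complex.exp (∑ i, ((-(|lam i| * ‖(z i)‖ ^ 2) : ℝ) : ℂ))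
          * Complex.exp (∑ i, ((-(|lam i| * ‖(w i)‖ ^ 2) : ℝ) : ℂ)) := by
      rw [hE, Finset.prod_mul_distrib, Complex.exp_sum, Complex.exp_sum]
    have hexpζ : (∏ i, Complex.exp (2 * ((|lam i| : ℝ) : ℂ) * ζ i))
        = Complex.exp (∑ i, 2 * ((|lam i| : ℝ) : ℂ) * ζ i) := by
      rw [Complex.exp_sum]
    have hfilt : ∑ i, 2 * ((|lam i| : ℝ) : ℂ) * ζ i
        = 2 * ((∑ i ∈ Finset.univ.filter (fun i : Fin n => (i : ℕ) < q),
              ((|lam i| : ℝ) : ℂ) * (starRingEnd ℂ) (z i) * w i)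
            + (∑ i ∈ Finset.univ.filter (fun i : Fin n => q ≤ (i : ℕ)),
              ((|lam i| : ℝ) : ℂ) * z i * (starRingEnd ℂ) (w i))) := by
      rw [← Finset.sum_filter_add_sum_filter_not Finset.univ (fun i : Fin n => (i : ℕ) < q)
        (fun i => 2 * ((|lam i| : ℝ) : ℂ) * ζ i)]
      rw [mul_add, Finset.mul_sum, Finset.mul_sum]
      congr 1
      · refine Finset.sum_congr rfl fun i hi => ?_
        have hiq : (i : ℕ) < q := (Finset.mem_filter.mp hi).2
        simp only [hζ, if_pos hiq, Complex.conj_conj]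
        ring
      · rw [show (Finset.univ.filter (fun i : Fin n => ¬ (i : ℕ) < q))
            = Finset.univ.filter (fun i : Fin n => q ≤ (i : ℕ)) by
          apply Finset.filter_congr; intro i _; simp [not_lt]]
        refine Finset.sum_congr rfl fun i hi => ?_
        have hiq : ¬ (i : ℕ) < q := not_lt.mpr (Finset.mem_filter.mp hi).2
        simp only [hζ, if_neg hiq, Complex.conj_conj]
        ring
    have hR : (∑ i, ((-(|lam i| * ‖(z i)‖ ^ 2) : ℝ) : ℂ))
        + (∑ i, ((-(|lam i| * ‖(w i)‖ ^ 2) : ℝ) : ℂ))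
        = -((∑ i, |lam i| * (‖(z i)‖ ^ 2 + ‖(w i)‖ ^ 2) : ℝ) : ℂ) := by
      push_cast
      rw [← Finset.sum_add_distrib, ← Finset.sum_neg_distrib]
      exact Finset.sum_congr rfl fun i _ => by ring
    rw [hC, hEprod, hexpζ, mul_assoc, ← Complex.exp_add, ← Complex.exp_add]
    rw [hR, hfilt]
    congr 1
    rw [sub_eq_neg_add]
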